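/- For every n ∈ ℕ there exists a polynomial P_n ∈ ℂ[X,Y] of total degree n such that z^{(n)}(z) = P_n(Re z, Im z) for all z ∈ Λ, each z^{(n)} is discrete analytic, and the family {z^{(n)} : n ∈ ℕ} is linearly independent over ℂ as functions on Λ. -/

import Mathlib

open Complex Finset GaussianInt

noncomputable section

/-- The lattice point `i` in the Gaussian integers. -/
def ii : GaussianInt := ⟨0, 1⟩

/-- `f` is discrete analytic on the whole lattice `Λ = ℤ + iℤ`. -/
def DAnalytic (f : GaussianInt → ℂ) : Prop :=
  ∀ z : GaussianInt,
    (f (z + 1 + ii) - f z) / (1 + Complex.I) = (f (z + 1) - f (z + ii)) / (1 - Complex.I)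

/-- `f` is discrete analytic on the right half lattice `Λ₊ = {z : Re z ≥ 0}`. -/
def DAnalyticOn (f : GaussianInt → ℂ) : Prop :=
  ∀ z : GaussianInt, 0 ≤ z.re →
    (f (z + 1 + ii) - f z) / (1 + Complex.I) = (f (z + 1) - f (z + ii)) / (1 - Complex.I)

/-- `γ 0, γ 1, …, γ n` is a path in the lattice from `a` to `b`:
consecutive points are at distance `1`. -/
def IsPath (γ : ℕ → GaussianInt) (n : ℕ) (a b : GaussianInt) : Prop :=
  γ 0 = a ∧ γ n = b ∧ ∀ k < n, ‖(γ (k + 1) : ℂ) - (γ k : ℂ)‖ = 1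

/-- The discrete integral `∫_γ f δz` along the path `γ 0, …, γ n`. -/
def discInt (f : GaussianInt → ℂ) (γ : ℕ → GaussianInt) (n : ℕ) : ℂ :=
  ∑ k ∈ Finset.range n, ((f (γ k) + f (γ (k + 1))) / 2) * ((γ (k + 1) : ℂ) - (γ k : ℂ))

/-- The canonical lattice path from `0` to `z`: first along the real axis, then vertically. -/
def cpath (z : GaussianInt) (k : ℕ) : GaussianInt :=
  ⟨z.re.sign * ((min k z.re.natAbs : ℕ) : ℤ),
   z.im.sign * ((min k (z.re.natAbs + z.im.natAbs) - z.re.natAbs : ℕ) : ℤ)⟩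

/-- The length of the canonical path from `0` to `z`. -/
def cpathLen (z : GaussianInt) : ℕ := z.re.natAbs + z.im.natAbs

/-- The operator `Z`: `Zf(z) = (f(0) - f(z))/2 + ∫_0^z f δz`, the integral being taken
along the canonical path (for discrete analytic `f` the integral is path-independent). -/
def Zop (f : GaussianInt → ℂ) : GaussianInt → ℂ := fun z =>
  (f 0 - f z) / 2 + discInt f (cpath z) (cpathLen z)

/-- The basic discrete analytic polynomials `z⁽ⁿ⁾ = Zⁿ1`. -/
def zpoly (n : ℕ) : GaussianInt → ℂ := Zop^[n] (fun _ => 1)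

/-- `α₊ = (1+i)/2`. -/
def aPlus : ℂ := (1 + Complex.I) / 2
/-- `α₋ = (1-i)/2`. -/
def aMinus : ℂ := (1 - Complex.I) / 2

/-- The difference operator `δx`. -/
def dxOp (f : GaussianInt → ℂ) : GaussianInt → ℂ := fun z => f (z + 1) - f z
/-- The difference operator `δy`. -/
def dyOp (f : GaussianInt → ℂ) : GaussianInt → ℂ := fun z => f (z + ii) - f z

/-- `f` belongs to the Hardy space `H₂(Λ₊)` with coefficient sequence `c`:
`f(z) = Σ c(n) z⁽ⁿ⁾(z)` on `Λ₊` and `Σ |c(n)|² < ∞`. -/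
def MemH2 (f : GaussianInt → ℂ) (c : ℕ → ℂ) : Prop :=
  Summable (fun n => ‖c n‖ ^ 2) ∧
  ∀ z : GaussianInt, 0 ≤ z.re → HasSum (fun n => c n * zpoly n z) (f z)


-- ### basic Gaussian integer lemmas

lemma gi_add_one (a b : ℤ) : (⟨a,b⟩ : GaussianInt) + 1 = ⟨a+1,b⟩ := by ext <;> simp

lemma gi_add_ii (a b : ℤ) : (⟨a,b⟩ : GaussianInt) + ii = ⟨a,b+1⟩ := by
  show (⟨a,b⟩ : GaussianInt) + ⟨0,1⟩ = ⟨a,b+1⟩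
  ext <;> simp

lemma gi_eta (z : GaussianInt) : z = ⟨z.re, z.im⟩ := rfl

-- ### sign helpers

lemma sign_mul_cast_nat (m d : ℕ) (h : d ≤ m) : ((m:ℤ).sign) * (d:ℤ) = d := by
  rcases m with _ | m
  · simp; omega
  · have : (((m:ℕ)+1:ℤ)).sign = 1 := Int.sign_eq_one_iff_pos.mpr (by omega)
    push_cast at this ⊢
    rw [this]; ring

lemma sign_mul_cast_neg (m d : ℕ) (h : d ≤ m) : ((-(m:ℤ)).sign) * (d:ℤ) = -d := by
  rcases m with _ | m
  · simp; omega
  · have : ((-((m:ℕ)+1:ℤ))).sign = -1 := Int.sign_eq_neg_one_iff_neg.mpr (by omega)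
    push_cast at this ⊢
    rw [this]; ring

-- ### cpath evaluation

lemma cpath_mk (a b : ℤ) (k : ℕ) : cpath ⟨a,b⟩ k =
    ⟨a.sign * ((min k a.natAbs : ℕ) : ℤ),
     b.sign * (((min k (a.natAbs + b.natAbs) - a.natAbs : ℕ)):ℤ)⟩ := rfl

lemma cpath_last (z : GaussianInt) : cpath z (cpathLen z) = z := by
  obtain ⟨a, b⟩ := z
  have hL : cpathLen ⟨a,b⟩ = a.natAbs + b.natAbs := rfl
  rw [cpath_mk, hL, Zsqrtd.ext_iff]
  have h1 : min (a.natAbs + b.natAbs) a.natAbs = a.natAbs := by omega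
  have h2 : (min (a.natAbs + b.natAbs) (a.natAbs + b.natAbs) - a.natAbs : ℕ) = b.natAbs := by omega
  rw [h1, h2]
  exact ⟨Int.sign_mul_natAbs a, Int.sign_mul_natAbs b⟩

-- ### discInt helpers

lemma discInt_succ (f : GaussianInt → ℂ) (γ : ℕ → GaussianInt) (n : ℕ) :
    discInt f γ (n+1) = discInt f γ n
      + ((f (γ n) + f (γ (n + 1))) / 2) * ((γ (n + 1) : ℂ) - (γ n : ℂ)) :=
  Finset.sum_range_succ _ _

lemma discInt_congr (f : GaussianInt → ℂ) {γ γ' : ℕ → GaussianInt} {n : ℕ}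
    (h : ∀ k ≤ n, γ k = γ' k) : discInt f γ n = discInt f γ' n := by
  unfold discInt
  refine Finset.sum_congr rfl fun k hk => ?_
  have hk' : k < n := Finset.mem_range.mp hk
  rw [h k (by omega), h (k+1) (by omega)]

lemma Zop_step (f : GaussianInt → ℂ) (z z' : GaussianInt)
    (hlen : cpathLen z' = cpathLen z + 1)
    (hpre : ∀ k ≤ cpathLen z, cpath z' k = cpath z k)
    (hend1 : cpath z' (cpathLen z) = z) :
    Zop f z' - Zop f z = (f z - f z')/2 + ((f z + f z')/2) * ((z':ℂ) - (z:ℂ)) := by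
  have hend2 : cpath z' (cpathLen z + 1) = z' := by rw [← hlen]; exact cpath_last z'
  unfold Zop
  rw [hlen, discInt_succ, discInt_congr f hpre, hend1, hend2]
  ring

-- appended to part1
section part2

lemma cpathLen_mk (a b : ℤ) : cpathLen ⟨a,b⟩ = a.natAbs + b.natAbs := rfl

lemma toComplex_mk (a b : ℤ) : ((⟨a,b⟩ : GaussianInt) : ℂ) = a + b * Complex.I :=
  GaussianInt.toComplex_def' a b

lemma Zop_step_x (f : GaussianInt → ℂ) (a : ℤ) :
    Zop f ⟨a+1,0⟩ - Zop f ⟨a,0⟩ = f ⟨a,0⟩ := by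
  rcases le_or_gt 0 a with ha | ha
  · lift a to ℕ using ha with m
    have hlen : cpathLen ⟨(m:ℤ)+1,0⟩ = cpathLen ⟨(m:ℤ),0⟩ + 1 := by
      rw [cpathLen_mk, cpathLen_mk]; omega
    have hcast : ((m:ℤ)+1) = ((m+1:ℕ):ℤ) := by push_cast; ring
    have hpre : ∀ k ≤ cpathLen ⟨(m:ℤ),0⟩, cpath ⟨(m:ℤ)+1,0⟩ k = cpath ⟨(m:ℤ),0⟩ k := by
      intro k hk
      rw [cpathLen_mk] at hk
      rw [cpath_mk, cpath_mk, Zsqrtd.ext_iff]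
      dsimp only
      constructor
      · have e1 : ((m:ℤ)+1).natAbs = m+1 := by omega
        have e2 : ((m:ℤ)).natAbs = m := by omega
        rw [e1, e2, hcast, sign_mul_cast_nat (m+1) _ (by omega),
          sign_mul_cast_nat m _ (by omega)]
        have : min k (m+1) = min k m := by omega
        rw [this]
      · simp
    have hend1 : cpath ⟨(m:ℤ)+1,0⟩ (cpathLen ⟨(m:ℤ),0⟩) = ⟨(m:ℤ),0⟩ := by
      rw [cpathLen_mk, cpath_mk, Zsqrtd.ext_iff]
      dsimp only
      constructor
      · have e1 : ((m:ℤ)+1).natAbs = m+1 := by omega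
        rw [e1, hcast, sign_mul_cast_nat (m+1) _ (by omega)]
        omega
      · simp
    have step := Zop_step f ⟨(m:ℤ),0⟩ ⟨(m:ℤ)+1,0⟩ hlen hpre hend1
    have hd : ((⟨(m:ℤ)+1,0⟩ : GaussianInt) : ℂ) - ((⟨(m:ℤ),0⟩ : GaussianInt) : ℂ) = 1 := by
      rw [toComplex_mk, toComplex_mk]; push_cast; ring
    rw [hd] at step
    linear_combination step
  · obtain ⟨m, rfl⟩ : ∃ m : ℕ, a = -(m:ℤ)-1 := ⟨(-a-1).toNat, by omega⟩
    have hval : (-(m:ℤ)-1+1) = -(m:ℤ) := by ring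
    rw [hval]
    have hcast : (-(m:ℤ)-1) = -((m+1:ℕ):ℤ) := by push_cast; ring
    have hlen : cpathLen ⟨-(m:ℤ)-1,0⟩ = cpathLen ⟨-(m:ℤ),0⟩ + 1 := by
      rw [cpathLen_mk, cpathLen_mk]; omega
    have hpre : ∀ k ≤ cpathLen ⟨-(m:ℤ),0⟩, cpath ⟨-(m:ℤ)-1,0⟩ k = cpath ⟨-(m:ℤ),0⟩ k := by
      intro k hk
      rw [cpathLen_mk] at hk
      rw [cpath_mk, cpath_mk, Zsqrtd.ext_iff]
      dsimp only
      constructor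
      · have e1 : (-(m:ℤ)-1).natAbs = m+1 := by omega
        have e2 : (-(m:ℤ)).natAbs = m := by omega
        rw [e1, e2, hcast, sign_mul_cast_neg (m+1) _ (by omega),
          sign_mul_cast_neg m _ (by omega)]
        omega
      · simp
    have hend1 : cpath ⟨-(m:ℤ)-1,0⟩ (cpathLen ⟨-(m:ℤ),0⟩) = ⟨-(m:ℤ),0⟩ := by
      rw [cpathLen_mk, cpath_mk, Zsqrtd.ext_iff]
      dsimp only
      constructor
      · have e1 : (-(m:ℤ)-1).natAbs = m+1 := by omega
        rw [e1, hcast, sign_mul_cast_neg (m+1) _ (by omega)]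
        omega
      · simp
    have step := Zop_step f ⟨-(m:ℤ),0⟩ ⟨-(m:ℤ)-1,0⟩ hlen hpre hend1
    have hd : ((⟨-(m:ℤ)-1,0⟩ : GaussianInt) : ℂ) - ((⟨-(m:ℤ),0⟩ : GaussianInt) : ℂ) = -1 := by
      rw [toComplex_mk, toComplex_mk]; push_cast; ring
    rw [hd] at step
    linear_combination -step

end part2


section part3

lemma Zop_step_y (f : GaussianInt → ℂ) (a b : ℤ) :
    Zop f ⟨a,b+1⟩ - Zop f ⟨a,b⟩
      = ((1+Complex.I) * f ⟨a,b⟩ + (Complex.I-1) * f ⟨a,b+1⟩)/2 := by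
  rcases le_or_gt 0 b with hb | hb
  · lift b to ℕ using hb with m
    have hcast : ((m:ℤ)+1) = ((m+1:ℕ):ℤ) := by push_cast; ring
    have hlen : cpathLen ⟨a,(m:ℤ)+1⟩ = cpathLen ⟨a,(m:ℤ)⟩ + 1 := by
      rw [cpathLen_mk, cpathLen_mk]; omega
    have hpre : ∀ k ≤ cpathLen ⟨a,(m:ℤ)⟩, cpath ⟨a,(m:ℤ)+1⟩ k = cpath ⟨a,(m:ℤ)⟩ k := by
      intro k hk
      rw [cpathLen_mk] at hk
      rw [cpath_mk, cpath_mk, Zsqrtd.ext_iff]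
      dsimp only
      refine ⟨rfl, ?_⟩
      have e1 : ((m:ℤ)+1).natAbs = m+1 := by omega
      have e2 : ((m:ℤ)).natAbs = m := by omega
      rw [e1, e2, hcast, sign_mul_cast_nat (m+1) _ (by omega),
        sign_mul_cast_nat m _ (by omega)]
      omega
    have hend1 : cpath ⟨a,(m:ℤ)+1⟩ (cpathLen ⟨a,(m:ℤ)⟩) = ⟨a,(m:ℤ)⟩ := by
      rw [cpathLen_mk, cpath_mk, Zsqrtd.ext_iff]
      dsimp only
      have e1 : ((m:ℤ)+1).natAbs = m+1 := by omega
      have e2 : ((m:ℤ)).natAbs = m := by omega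
      constructor
      · have e3 : min (a.natAbs + (m:ℤ).natAbs) a.natAbs = a.natAbs := by omega
        rw [e3]
        exact Int.sign_mul_natAbs a
      · rw [e1, e2, hcast, sign_mul_cast_nat (m+1) _ (by omega)]
        omega
    have step := Zop_step f ⟨a,(m:ℤ)⟩ ⟨a,(m:ℤ)+1⟩ hlen hpre hend1
    have hd : ((⟨a,(m:ℤ)+1⟩ : GaussianInt) : ℂ) - ((⟨a,(m:ℤ)⟩ : GaussianInt) : ℂ)
        = Complex.I := by
      rw [toComplex_mk, toComplex_mk]; push_cast; ring
    rw [hd] at step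
    linear_combination step
  · obtain ⟨m, rfl⟩ : ∃ m : ℕ, b = -(m:ℤ)-1 := ⟨(-b-1).toNat, by omega⟩
    have hval : (-(m:ℤ)-1+1) = -(m:ℤ) := by ring
    rw [hval]
    have hcast : (-(m:ℤ)-1) = -((m+1:ℕ):ℤ) := by push_cast; ring
    have hlen : cpathLen ⟨a,-(m:ℤ)-1⟩ = cpathLen ⟨a,-(m:ℤ)⟩ + 1 := by
      rw [cpathLen_mk, cpathLen_mk]; omega
    have hpre : ∀ k ≤ cpathLen ⟨a,-(m:ℤ)⟩, cpath ⟨a,-(m:ℤ)-1⟩ k = cpath ⟨a,-(m:ℤ)⟩ k := by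
      intro k hk
      rw [cpathLen_mk] at hk
      rw [cpath_mk, cpath_mk, Zsqrtd.ext_iff]
      dsimp only
      refine ⟨rfl, ?_⟩
      have e1 : (-(m:ℤ)-1).natAbs = m+1 := by omega
      have e2 : (-(m:ℤ)).natAbs = m := by omega
      rw [e1, e2, hcast, sign_mul_cast_neg (m+1) _ (by omega),
        sign_mul_cast_neg m _ (by omega)]
      omega
    have hend1 : cpath ⟨a,-(m:ℤ)-1⟩ (cpathLen ⟨a,-(m:ℤ)⟩) = ⟨a,-(m:ℤ)⟩ := by
      rw [cpathLen_mk, cpath_mk, Zsqrtd.ext_iff]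
      dsimp only
      have e1 : (-(m:ℤ)-1).natAbs = m+1 := by omega
      have e2 : (-(m:ℤ)).natAbs = m := by omega
      constructor
      · have e3 : min (a.natAbs + (-(m:ℤ)).natAbs) a.natAbs = a.natAbs := by omega
        rw [e3]
        exact Int.sign_mul_natAbs a
      · rw [e1, e2, hcast, sign_mul_cast_neg (m+1) _ (by omega)]
        omega
    have step := Zop_step f ⟨a,-(m:ℤ)⟩ ⟨a,-(m:ℤ)-1⟩ hlen hpre hend1
    have hd : ((⟨a,-(m:ℤ)-1⟩ : GaussianInt) : ℂ) - ((⟨a,-(m:ℤ)⟩ : GaussianInt) : ℂ)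
        = -Complex.I := by
      rw [toComplex_mk, toComplex_mk]; push_cast; ring
    rw [hd] at step
    linear_combination -step

lemma Zop_zero (f : GaussianInt → ℂ) : Zop f 0 = 0 := by
  have h0 : (0 : GaussianInt) = ⟨0,0⟩ := rfl
  unfold Zop
  rw [h0, cpathLen_mk]
  show (f ⟨0,0⟩ - f ⟨0,0⟩)/2 + discInt f (cpath ⟨0,0⟩) ((0:ℤ).natAbs + (0:ℤ).natAbs) = 0
  have : ((0:ℤ).natAbs + (0:ℤ).natAbs) = 0 := rfl
  rw [this]
  unfold discInt
  simp

end part3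


section part4

/-- Signed sum: `ssum F b = Σ_{k ∈ [0,b)} F k` for `b ≥ 0`, `-Σ_{k ∈ [b,0)} F k` for `b < 0`. -/
def ssum (F : ℤ → ℂ) (b : ℤ) : ℂ :=
  ∑ k ∈ Finset.range b.toNat, F k - ∑ k ∈ Finset.range (-b).toNat, F (-(k+1:ℕ))

lemma ssum_zero (F : ℤ → ℂ) : ssum F 0 = 0 := by simp [ssum]

lemma ssum_succ (F : ℤ → ℂ) (b : ℤ) : ssum F (b+1) = ssum F b + F b := by
  rcases le_or_gt 0 b with hb | hb
  · have h1 : (b+1).toNat = b.toNat + 1 := by omega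
    have h2 : (-(b+1)).toNat = 0 := by omega
    have h3 : (-b).toNat = 0 := by omega
    rw [ssum, ssum, h1, h2, h3, Finset.sum_range_succ]
    have : ((b.toNat : ℤ)) = b := by omega
    rw [this]; ring
  · have h1 : (b+1).toNat = 0 := by omega
    have h2 : b.toNat = 0 := by omega
    have h3 : (-b).toNat = (-(b+1)).toNat + 1 := by omega
    rw [ssum, ssum, h1, h2, h3, Finset.sum_range_succ]
    have : (-(((-(b+1)).toNat : ℤ)+1)) = b := by omega
    rw [show (-((-(b+1)).toNat+1:ℕ) : ℤ) = -(((-(b+1)).toNat : ℤ)+1) from by push_cast; ring, this]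
    ring

/-- Two functions on `ℤ` with the same value at `0` and the same increments agree. -/
lemma int_ext {g h : ℤ → ℂ} (h0 : g 0 = h 0)
    (hs : ∀ b : ℤ, g (b+1) - g b = h (b+1) - h b) : ∀ b, g b = h b := by
  intro b
  induction b using Int.induction_on with
  | zero => exact h0
  | succ k ih => have := hs k; push_cast at this ⊢; linear_combination this + ih
  | pred k ih =>
      have h2 := hs (-(k:ℤ)-1)
      rw [show (-(k:ℤ)-1+1) = -(k:ℤ) from by ring] at h2
      push_cast
      linear_combination ih - h2

lemma Zop_axis (f : GaussianInt → ℂ) (a : ℤ) :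
    Zop f ⟨a,0⟩ = ssum (fun k => f ⟨k,0⟩) a := by
  have := int_ext (g := fun a => Zop f ⟨a,0⟩) (h := fun a => ssum (fun k => f ⟨k,0⟩) a)
    ?_ ?_ a
  · exact this
  · show Zop f ⟨0,0⟩ = ssum _ 0
    rw [ssum_zero]
    exact Zop_zero f
  · intro b
    show Zop f ⟨b+1,0⟩ - Zop f ⟨b,0⟩ = _
    rw [Zop_step_x, ssum_succ]
    ring

lemma Zop_val (f : GaussianInt → ℂ) (a b : ℤ) :
    Zop f ⟨a,b⟩ = ssum (fun k => f ⟨k,0⟩) a + Complex.I * ssum (fun j => f ⟨a,j⟩) b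
      + (Complex.I-1)/2 * (f ⟨a,b⟩ - f ⟨a,0⟩) := by
  have := int_ext (g := fun b => Zop f ⟨a,b⟩)
    (h := fun b => ssum (fun k => f ⟨k,0⟩) a + Complex.I * ssum (fun j => f ⟨a,j⟩) b
      + (Complex.I-1)/2 * (f ⟨a,b⟩ - f ⟨a,0⟩)) ?_ ?_ b
  · exact this
  · show Zop f ⟨a,0⟩ = _
    rw [Zop_axis, ssum_zero]
    ring
  · intro c
    show Zop f ⟨a,c+1⟩ - Zop f ⟨a,c⟩ = _
    rw [Zop_step_y, ssum_succ]
    ring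

end part4


section part5

lemma one_add_I_ne : (1 + Complex.I) ≠ 0 := by
  intro h
  have := congrArg Complex.re h
  simp at this

lemma one_sub_I_ne : (1 - Complex.I) ≠ 0 := by
  intro h
  have := congrArg Complex.re h
  simp at this

lemma danal_mk {f : GaussianInt → ℂ} (hf : DAnalytic f) (a b : ℤ) :
    f ⟨a+1,b+1⟩ = f ⟨a,b⟩ + Complex.I * f ⟨a+1,b⟩ - Complex.I * f ⟨a,b+1⟩ := by
  have h := hf ⟨a,b⟩
  rw [gi_add_one, gi_add_ii, gi_add_ii, div_eq_div_iff one_add_I_ne one_sub_I_ne] at h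
  have hI := Complex.I_sq
  linear_combination ((1+Complex.I)/2) * h + (f ⟨a+1,b⟩ - f ⟨a,b+1⟩)/2 * hI
    + (f ⟨a+1,b+1⟩ - f ⟨a,b⟩)/2 * hI

lemma DAnalytic_Zop {f : GaussianInt → ℂ} (hf : DAnalytic f) : DAnalytic (Zop f) := by
  intro z
  obtain ⟨a, b⟩ := z
  rw [gi_add_one, gi_add_ii, gi_add_ii, div_eq_div_iff one_add_I_ne one_sub_I_ne]
  have key := int_ext
    (g := fun c => (Zop f ⟨a+1,c+1⟩ - Zop f ⟨a,c⟩) * (1-Complex.I)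
      - (Zop f ⟨a+1,c⟩ - Zop f ⟨a,c+1⟩) * (1+Complex.I))
    (h := fun _ => 0) ?_ ?_ b
  · try dsimp only at key
    linear_combination key
  · try dsimp only
    have hI := Complex.I_sq
    linear_combination (1-Complex.I) * Zop_step_y f (a+1) 0 + (1+Complex.I) * Zop_step_y f a 0
      - 2*Complex.I* Zop_step_x f a + Complex.I * danal_mk hf a 0
      + ((f ⟨a+1,0⟩ - f ⟨a+1,0+1⟩ + f ⟨a,0⟩ - f ⟨a,0+1⟩)/2) * hI
  · intro c
    have hI := Complex.I_sq
    linear_combination (1-Complex.I) * Zop_step_y f (a+1) (c+1) - (1-Complex.I) * Zop_step_y f a c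
      - (1+Complex.I) * Zop_step_y f (a+1) c + (1+Complex.I) * Zop_step_y f a (c+1)
      + danal_mk hf a c + Complex.I * danal_mk hf a (c+1)
      + (- f ⟨a+1,c+1+1⟩/2 + f ⟨a,c+1⟩ - f ⟨a,c+1+1⟩/2 + f ⟨a,c⟩/2 - f ⟨a+1,c⟩/2) * hI

lemma DAnalytic_const : DAnalytic (fun _ : GaussianInt => (1:ℂ)) := by
  intro z; simp

lemma zpoly_zero : zpoly 0 = fun _ => (1:ℂ) := rfl

lemma zpoly_succ (n : ℕ) : zpoly (n+1) = Zop (zpoly n) :=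
  Function.iterate_succ_apply' Zop n _

lemma zpoly_analytic (n : ℕ) : DAnalytic (zpoly n) := by
  induction n with
  | zero => exact DAnalytic_const
  | succ n ih => rw [zpoly_succ]; exact DAnalytic_Zop ih

end part5


section part6

def cfun (n : ℕ) (a : ℤ) : ℂ := (∏ j ∈ Finset.range n, ((a:ℂ) - j)) / n.factorial

lemma cfun_zero (a : ℤ) : cfun 0 a = 1 := by simp [cfun]

lemma cfun_succ_zero (n : ℕ) : cfun (n+1) 0 = 0 := by
  have : (∏ j ∈ Finset.range (n+1), (((0:ℤ):ℂ) - j)) = 0 :=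
    Finset.prod_eq_zero (Finset.mem_range.mpr (Nat.succ_pos n)) (by simp)
  rw [cfun, this, zero_div]

lemma cfun_vanish {n m : ℕ} (h : m < n) : cfun n m = 0 := by
  have : (∏ j ∈ Finset.range n, (((m:ℤ):ℂ) - j)) = 0 :=
    Finset.prod_eq_zero (Finset.mem_range.mpr h) (by push_cast; ring)
  rw [cfun, this, zero_div]

lemma cfun_diag_ne (n : ℕ) : cfun n n ≠ 0 := by
  rw [cfun, div_ne_zero_iff]
  constructor
  · rw [Finset.prod_ne_zero_iff]
    intro j hj
    have hj' : j < n := Finset.mem_range.mp hj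
    intro hz
    have he : (((n:ℤ)):ℂ) = (j:ℂ) := by linear_combination hz
    have : (n:ℕ) = j := by exact_mod_cast he
    omega
  · exact_mod_cast Nat.factorial_ne_zero n

lemma cfun_step (n : ℕ) (a : ℤ) : cfun (n+1) (a+1) - cfun (n+1) a = cfun n a := by
  have e1 : (∏ j ∈ Finset.range (n+1), ((((a+1:ℤ)):ℂ) - j)) =
      (∏ j ∈ Finset.range n, ((a:ℂ) - j)) * ((a:ℂ)+1) := by
    rw [Finset.prod_range_succ']
    push_cast
    have hbody : ∀ j ∈ Finset.range n, ((a:ℂ)+1 - (↑j+1)) = ((a:ℂ) - j) :=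
      fun j _ => by ring
    rw [Finset.prod_congr rfl hbody]
    ring
  have e2 : (∏ j ∈ Finset.range (n+1), ((a:ℂ) - j)) =
      (∏ j ∈ Finset.range n, ((a:ℂ) - j)) * ((a:ℂ) - n) := Finset.prod_range_succ _ _
  rw [cfun, cfun, cfun]
  push_cast at e1 ⊢
  rw [e1, e2, Nat.factorial_succ]
  have h1 : ((n.factorial : ℂ)) ≠ 0 := by exact_mod_cast Nat.factorial_ne_zero n
  have h2 : (((n+1) * n.factorial : ℕ) : ℂ) ≠ 0 := by
    exact_mod_cast Nat.mul_ne_zero (Nat.succ_ne_zero n) (Nat.factorial_ne_zero n)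
  push_cast at h2
  field_simp
  push_cast
  ring

lemma zpoly_axis (n : ℕ) (a : ℤ) : zpoly n ⟨a,0⟩ = cfun n a := by
  induction n generalizing a with
  | zero => rw [cfun_zero]; rfl
  | succ n ih =>
      rw [zpoly_succ, Zop_axis]
      have := int_ext (g := fun a => ssum (fun k => zpoly n ⟨k,0⟩) a)
        (h := fun a => cfun (n+1) a) ?_ ?_ a
      · exact this
      · show ssum _ 0 = _
        rw [ssum_zero, cfun_succ_zero]
      · intro b
        rw [ssum_succ, cfun_step, ih]
        ring

lemma zpoly_linearIndependent : LinearIndependent ℂ (zpoly : ℕ → GaussianInt → ℂ) := by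
  rw [linearIndependent_iff']
  intro s g hsum
  have key : ∀ i : ℕ, i ∈ s → g i = 0 := by
    intro i
    induction i using Nat.strong_induction_on with
    | _ i IH =>
      intro his
      have hv := congrFun hsum (⟨(i:ℤ),0⟩ : GaussianInt)
      rw [Finset.sum_apply] at hv
      have hv' : ∑ j ∈ s, g j * zpoly j ⟨(i:ℤ),0⟩ = 0 := by
        simpa using hv
      rw [Finset.sum_eq_single i (fun j hj hne => ?_) (fun habs => absurd his habs)] at hv'
      · have := cfun_diag_ne i
        rw [zpoly_axis] at hv'
        exact (mul_eq_zero.mp hv').resolve_right this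
      · rcases lt_or_gt_of_ne hne with hlt | hgt
        · rw [IH j hlt hj]; ring
        · rw [zpoly_axis, cfun_vanish hgt]; ring
  exact key

end part6


section part7

open MvPolynomial in
/-- Evaluation of a 2-variable polynomial at an integer lattice point. -/
def pe (P : MvPolynomial (Fin 2) ℂ) (a b : ℤ) : ℂ :=
  MvPolynomial.eval (fun j : Fin 2 => if j = 0 then ((a:ℤ):ℂ) else ((b:ℤ):ℂ)) P

lemma pe_eval (P : MvPolynomial (Fin 2) ℂ) (a b : ℤ) :
    pe P a b = ∑ d ∈ P.support, P.coeff d * (a:ℂ)^(d 0) * (b:ℂ)^(d 1) := by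
  rw [pe, MvPolynomial.eval_eq']
  refine Finset.sum_congr rfl fun d _ => ?_
  rw [Fin.prod_univ_two, if_pos rfl, if_neg (by decide)]
  ring

lemma deg_mem {P : MvPolynomial (Fin 2) ℂ} {d : Fin 2 →₀ ℕ} (hd : d ∈ P.support) :
    d 0 + d 1 ≤ P.totalDegree := by
  have h : (d.sum fun _ e => e) = d 0 + d 1 := by
    rw [Finsupp.sum_fintype _ _ (fun _ => rfl), Fin.sum_univ_two]
  rw [← h]
  exact MvPolynomial.le_totalDegree hd

/-- Discrete antiderivative of `Y^q` as a polynomial in `Y` (variable `1`). -/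
def phi : ℕ → MvPolynomial (Fin 2) ℂ
  | q => ((q:ℂ)+1)⁻¹ • ((MvPolynomial.X 1)^(q+1)
      - ∑ r ∈ (Finset.range q).attach,
          ((((q+1).choose r):ℕ):ℂ) • phi r)
  termination_by q => q
  decreasing_by exact Finset.mem_range.mp r.2

lemma phi_def (q : ℕ) : phi q = ((q:ℂ)+1)⁻¹ • ((MvPolynomial.X 1)^(q+1)
    - ∑ r ∈ Finset.range q, ((((q+1).choose r):ℕ):ℂ) • phi r) := by
  rw [phi]
  congr 1
  congr 1
  exact Finset.sum_attach (Finset.range q) (fun r => ((((q+1).choose r):ℕ):ℂ) • phi r)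

lemma phi_totalDegree (q : ℕ) : (phi q).totalDegree ≤ q + 1 := by
  induction q using Nat.strong_induction_on with
  | _ q IH =>
    rw [phi_def]
    refine le_trans (MvPolynomial.totalDegree_smul_le _ _) ?_
    rw [sub_eq_add_neg]
    refine le_trans (MvPolynomial.totalDegree_add _ _) (max_le ?_ ?_)
    · rw [MvPolynomial.totalDegree_X_pow]
    · rw [MvPolynomial.totalDegree_neg]
      have h1 : (∑ r ∈ Finset.range q, ((((q+1).choose r):ℕ):ℂ) • phi r).totalDegree
          ≤ (Finset.range q).sup (fun r => (((((q+1).choose r):ℕ):ℂ) • phi r).totalDegree) :=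
        MvPolynomial.totalDegree_finset_sum _ _
      refine le_trans h1 (Finset.sup_le fun r hr => ?_)
      refine le_trans (MvPolynomial.totalDegree_smul_le _ _) ?_
      have hr' : r < q := Finset.mem_range.mp hr
      exact le_trans (IH r hr') (by omega)

lemma pe_phi_expand (q : ℕ) (a c : ℤ) : pe (phi q) a c = ((q:ℂ)+1)⁻¹ * (((c:ℤ):ℂ)^(q+1)
    - ∑ r ∈ Finset.range q, ((((q+1).choose r):ℕ):ℂ) * pe (phi r) a c) := by
  rw [phi_def, pe]
  simp only [MvPolynomial.smul_eq_C_mul, map_mul, map_sub, map_pow, map_sum,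
    MvPolynomial.eval_C, MvPolynomial.eval_X]
  rw [if_neg (by decide : ¬ (1:Fin 2) = 0)]
  rfl

lemma pe_phi_zero (q : ℕ) (a : ℤ) : pe (phi q) a 0 = 0 := by
  induction q using Nat.strong_induction_on with
  | _ q IH =>
    rw [pe_phi_expand]
    have hsum : ∑ r ∈ Finset.range q, ((((q+1).choose r):ℕ):ℂ) * pe (phi r) a 0 = 0 := by
      refine Finset.sum_eq_zero fun r hr => ?_
      rw [IH r (Finset.mem_range.mp hr)]
      ring
    rw [hsum]
    push_cast
    rw [zero_pow (Nat.succ_ne_zero q)]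
    ring

lemma pe_phi_step (q : ℕ) (a b : ℤ) :
    pe (phi q) a (b+1) - pe (phi q) a b = (b:ℂ)^q := by
  induction q using Nat.strong_induction_on with
  | _ q IH =>
    have hq : ((q:ℂ)+1) ≠ 0 := by
      have : ((q:ℂ)+1) = ((q+1:ℕ):ℂ) := by push_cast; ring
      rw [this]
      exact_mod_cast Nat.succ_ne_zero q
    have hdiff : ∑ r ∈ Finset.range q, ((((q+1).choose r):ℕ):ℂ) * pe (phi r) a (b+1)
        - ∑ r ∈ Finset.range q, ((((q+1).choose r):ℕ):ℂ) * pe (phi r) a b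
        = ∑ r ∈ Finset.range q, ((((q+1).choose r):ℕ):ℂ) * (b:ℂ)^r := by
      rw [← Finset.sum_sub_distrib]
      refine Finset.sum_congr rfl fun r hr => ?_
      have := IH r (Finset.mem_range.mp hr)
      linear_combination ((((q+1).choose r):ℕ):ℂ) * this
    have hbin : ((b:ℂ)+1)^(q+1)
        = ∑ r ∈ Finset.range (q+2), ((((q+1).choose r):ℕ):ℂ) * (b:ℂ)^r := by
      rw [add_pow]
      refine Finset.sum_congr rfl fun r _ => ?_
      rw [one_pow]
      ring
    have hc : (((b+1:ℤ)):ℂ) = (b:ℂ)+1 := by push_cast; ring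
    rw [pe_phi_expand, pe_phi_expand, hc, hbin, Finset.sum_range_succ, Finset.sum_range_succ,
      Nat.choose_succ_self_right, Nat.choose_self, Nat.cast_one]
    have hc2 : ((q+1:ℕ):ℂ) = (q:ℂ)+1 := by push_cast; ring
    rw [hc2]
    linear_combination (-((q:ℂ)+1)⁻¹) * hdiff + (b:ℂ)^q * (mul_inv_cancel₀ hq)

/-- Summation lemma: the discrete antiderivative of a polynomial is a polynomial. -/
lemma sumrep (P : MvPolynomial (Fin 2) ℂ) :
    ∃ Q : MvPolynomial (Fin 2) ℂ, Q.totalDegree ≤ P.totalDegree + 1 ∧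
      ∀ a b : ℤ, ssum (fun j => pe P a j) b = pe Q a b := by
  refine ⟨∑ d ∈ P.support, MvPolynomial.C (P.coeff d) * (MvPolynomial.X 0)^(d 0) * phi (d 1),
    ?_, ?_⟩
  · have h0 : (∑ d ∈ P.support, MvPolynomial.C (P.coeff d) * (MvPolynomial.X 0)^(d 0) * phi (d 1)).totalDegree
        ≤ P.support.sup (fun d => (MvPolynomial.C (P.coeff d) * (MvPolynomial.X 0)^(d 0) * phi (d 1)).totalDegree) :=
      MvPolynomial.totalDegree_finset_sum _ _
    refine le_trans h0 (Finset.sup_le fun d hd => ?_)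
    refine le_trans (MvPolynomial.totalDegree_mul _ _) ?_
    have h1 : (MvPolynomial.C (P.coeff d) * (MvPolynomial.X 0:MvPolynomial (Fin 2) ℂ)^(d 0)).totalDegree ≤ d 0 := by
      refine le_trans (MvPolynomial.totalDegree_mul _ _) ?_
      rw [MvPolynomial.totalDegree_C, MvPolynomial.totalDegree_X_pow]
      omega
    have h2 := phi_totalDegree (d 1)
    have h3 := deg_mem hd
    omega
  · intro a b
    have hQ : ∀ c : ℤ, pe (∑ d ∈ P.support,
          MvPolynomial.C (P.coeff d) * (MvPolynomial.X 0)^(d 0) * phi (d 1)) a c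
        = ∑ d ∈ P.support, P.coeff d * (a:ℂ)^(d 0) * pe (phi (d 1)) a c := by
      intro c
      rw [pe, map_sum]
      refine Finset.sum_congr rfl fun d _ => ?_
      rw [map_mul, map_mul, MvPolynomial.eval_C, map_pow, MvPolynomial.eval_X, if_pos rfl]
      rfl
    have := int_ext (g := fun b => ssum (fun j => pe P a j) b)
      (h := fun b => ∑ d ∈ P.support, P.coeff d * (a:ℂ)^(d 0) * pe (phi (d 1)) a b) ?_ ?_ b
    · rw [this, hQ]
    · rw [ssum_zero]
      refine (Finset.sum_eq_zero fun d _ => ?_).symm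
      rw [pe_phi_zero]
      ring
    · intro c
      rw [ssum_succ, ← Finset.sum_sub_distrib]
      have hterm : ∀ d ∈ P.support, P.coeff d * (a:ℂ)^(d 0) * pe (phi (d 1)) a (c+1)
          - P.coeff d * (a:ℂ)^(d 0) * pe (phi (d 1)) a c
          = P.coeff d * (a:ℂ)^(d 0) * (c:ℂ)^(d 1) := by
        intro d _
        linear_combination (P.coeff d * (a:ℂ)^(d 0)) * pe_phi_step (d 1) a c
      rw [Finset.sum_congr rfl hterm, ← pe_eval]
      ring

end part7


section part8

/-- The polynomial `(X - 0)(X - 1)⋯(X - (n-1))/n!` in the first variable. -/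
def cpoly (n : ℕ) : MvPolynomial (Fin 2) ℂ :=
  ((n.factorial : ℂ))⁻¹ • ∏ j ∈ Finset.range n, (MvPolynomial.X 0 - MvPolynomial.C (j:ℂ))

lemma pe_cpoly (n : ℕ) (a b : ℤ) : pe (cpoly n) a b = cfun n a := by
  rw [cpoly, pe, MvPolynomial.smul_eq_C_mul, map_mul, MvPolynomial.eval_C, map_prod]
  have : ∀ j ∈ Finset.range n,
      MvPolynomial.eval (fun j : Fin 2 => if j = 0 then ((a:ℤ):ℂ) else ((b:ℤ):ℂ))
        (MvPolynomial.X 0 - MvPolynomial.C (j:ℂ)) = ((a:ℂ) - j) := by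
    intro j _
    rw [map_sub, MvPolynomial.eval_X, MvPolynomial.eval_C, if_pos rfl]
  rw [Finset.prod_congr rfl this, cfun]
  field_simp

lemma cpoly_totalDegree (n : ℕ) : (cpoly n).totalDegree ≤ n := by
  rw [cpoly]
  refine le_trans (MvPolynomial.totalDegree_smul_le _ _) ?_
  refine le_trans (MvPolynomial.totalDegree_finset_prod _ _) ?_
  have : ∀ j ∈ Finset.range n,
      ((MvPolynomial.X 0 - MvPolynomial.C (j:ℂ) : MvPolynomial (Fin 2) ℂ)).totalDegree ≤ 1 := by
    intro j _
    rw [sub_eq_add_neg]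
    refine le_trans (MvPolynomial.totalDegree_add _ _) (max_le ?_ ?_)
    · rw [MvPolynomial.totalDegree_X]
    · rw [MvPolynomial.totalDegree_neg, MvPolynomial.totalDegree_C]
      omega
  calc ∑ j ∈ Finset.range n,
        ((MvPolynomial.X 0 - MvPolynomial.C (j:ℂ) : MvPolynomial (Fin 2) ℂ)).totalDegree
      ≤ ∑ _j ∈ Finset.range n, 1 := Finset.sum_le_sum this
    _ = n := by simp

lemma pe_add (P Q : MvPolynomial (Fin 2) ℂ) (a b : ℤ) :
    pe (P + Q) a b = pe P a b + pe Q a b := by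
  rw [pe, pe, pe, map_add]

lemma pe_sub (P Q : MvPolynomial (Fin 2) ℂ) (a b : ℤ) :
    pe (P - Q) a b = pe P a b - pe Q a b := by
  rw [pe, pe, pe, map_sub]

lemma pe_smul (c : ℂ) (P : MvPolynomial (Fin 2) ℂ) (a b : ℤ) :
    pe (c • P) a b = c * pe P a b := by
  rw [pe, pe, MvPolynomial.smul_eq_C_mul, map_mul, MvPolynomial.eval_C]

lemma zpoly_rep (n : ℕ) : ∃ P : MvPolynomial (Fin 2) ℂ, P.totalDegree ≤ n ∧
    ∀ a b : ℤ, zpoly n ⟨a,b⟩ = pe P a b := by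
  induction n with
  | zero =>
      refine ⟨1, le_of_eq MvPolynomial.totalDegree_one, fun a b => ?_⟩
      rw [pe, map_one]
      rfl
  | succ n ih =>
      obtain ⟨P, hPd, hP⟩ := ih
      obtain ⟨Q, hQd, hQ⟩ := sumrep P
      refine ⟨cpoly (n+1) + Complex.I • Q + ((Complex.I - 1)/2) • (P - cpoly n), ?_, ?_⟩
      · refine le_trans (MvPolynomial.totalDegree_add _ _) (max_le ?_ ?_)
        · refine le_trans (MvPolynomial.totalDegree_add _ _) (max_le ?_ ?_)
          · exact cpoly_totalDegree (n+1)
          · exact le_trans (MvPolynomial.totalDegree_smul_le _ _) (le_trans hQd (by omega))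
        · refine le_trans (MvPolynomial.totalDegree_smul_le _ _) ?_
          rw [sub_eq_add_neg]
          refine le_trans (MvPolynomial.totalDegree_add _ _) (max_le ?_ ?_)
          · omega
          · rw [MvPolynomial.totalDegree_neg]
            exact le_trans (cpoly_totalDegree n) (by omega)
      · intro a b
        rw [zpoly_succ, Zop_val]
        have e1 : ssum (fun k => zpoly n ⟨k,0⟩) a = cfun (n+1) a := by
          rw [← Zop_axis, ← zpoly_succ, zpoly_axis]
        have e2 : ssum (fun j => zpoly n ⟨a,j⟩) b = pe Q a b := by
          have hfun : (fun j => zpoly n ⟨a,j⟩) = fun j => pe P a j := funext (hP a)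
          rw [hfun, hQ]
        have e3 : zpoly n ⟨a,b⟩ = pe P a b := hP a b
        have e4 : zpoly n ⟨a,0⟩ = cfun n a := zpoly_axis n a
        rw [e1, e2, e3, e4, pe_add, pe_add, pe_smul, pe_smul, pe_sub,
          pe_cpoly, pe_cpoly]

lemma zpoly_poly (n : ℕ) : ∃ P : MvPolynomial (Fin 2) ℂ, P.totalDegree = n ∧
    ∀ a b : ℤ, zpoly n ⟨a,b⟩ = pe P a b := by
  obtain ⟨P, hPd, hP⟩ := zpoly_rep n
  refine ⟨P, ?_, hP⟩
  refine le_antisymm hPd ?_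
  -- lower bound via the univariate restriction to the real axis
  set u : Polynomial ℂ := ∑ d ∈ P.support,
    if d 1 = 0 then Polynomial.C (P.coeff d) * Polynomial.X ^ (d 0) else 0 with hu
  have hu_eval : ∀ a : ℤ, u.eval (a:ℂ) = pe P a 0 := by
    intro a
    rw [hu, Polynomial.eval_finset_sum, pe_eval]
    refine Finset.sum_congr rfl fun d _ => ?_
    by_cases h : d 1 = 0
    · rw [if_pos h, h, pow_zero, Polynomial.eval_mul, Polynomial.eval_C, Polynomial.eval_pow,
        Polynomial.eval_X]
      ring
    · rw [if_neg h]
      have : ((0:ℤ):ℂ)^(d 1) = 0 := by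
        rw [show ((0:ℤ):ℂ) = 0 from by push_cast; rfl]
        exact zero_pow h
      rw [this]
      simp
  have hu_deg : u.natDegree ≤ P.totalDegree := by
    rw [hu]
    refine Polynomial.natDegree_sum_le_of_forall_le _ _ fun d hd => ?_
    by_cases h : d 1 = 0
    · rw [if_pos h]
      refine le_trans Polynomial.natDegree_mul_le ?_
      rw [Polynomial.natDegree_C, Polynomial.natDegree_X_pow]
      have := deg_mem hd
      omega
    · rw [if_neg h, Polynomial.natDegree_zero]
      omega
  set v : Polynomial ℂ := Polynomial.C ((n.factorial:ℂ))⁻¹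
      * ∏ j ∈ Finset.range n, (Polynomial.X - Polynomial.C (j:ℂ)) with hv
  have hv_eval : ∀ a : ℤ, v.eval (a:ℂ) = cfun n a := by
    intro a
    rw [hv, Polynomial.eval_mul, Polynomial.eval_C, Polynomial.eval_prod, cfun]
    have : ∀ j ∈ Finset.range n,
        Polynomial.eval (a:ℂ) (Polynomial.X - Polynomial.C (j:ℂ)) = ((a:ℂ) - j) := by
      intro j _
      rw [Polynomial.eval_sub, Polynomial.eval_X, Polynomial.eval_C]
    rw [Finset.prod_congr rfl this]
    field_simp
  have hfac : ((n.factorial:ℂ))⁻¹ ≠ 0 :=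
    inv_ne_zero (by exact_mod_cast Nat.factorial_ne_zero n)
  have hv_deg : v.natDegree = n := by
    rw [hv, Polynomial.natDegree_C_mul hfac,
      Polynomial.natDegree_prod _ _ (fun j _ => Polynomial.X_sub_C_ne_zero _)]
    have hdeg1 : ∀ j ∈ Finset.range n, (Polynomial.X - Polynomial.C ((j:ℕ):ℂ)).natDegree = 1 :=
      fun j _ => Polynomial.natDegree_X_sub_C _
    rw [Finset.sum_congr rfl hdeg1, Finset.sum_const, Finset.card_range, smul_eq_mul, mul_one]
  have huv : u = v := by
    refine Polynomial.eq_of_infinite_eval_eq u v ?_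
    refine Set.Infinite.mono ?_ (Set.infinite_range_of_injective
      (Int.cast_injective : Function.Injective ((↑) : ℤ → ℂ)))
    rintro x ⟨a, rfl⟩
    show u.eval (a:ℂ) = v.eval (a:ℂ)
    rw [hu_eval, hv_eval, ← hP a 0, zpoly_axis]
  calc n = v.natDegree := hv_deg.symm
    _ = u.natDegree := by rw [huv]
    _ ≤ P.totalDegree := hu_deg


end part8

/-- Each `z⁽ⁿ⁾ = Zⁿ1` is given on `Λ` by a polynomial of total degree `n`
in `(Re z, Im z)`, each `z⁽ⁿ⁾` is discrete analytic, and the family `{z⁽ⁿ⁾ : n ∈ ℕ}` is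
linearly independent over `ℂ`. -/
theorem stmt6 :
    (∀ n : ℕ, ∃ P : MvPolynomial (Fin 2) ℂ, P.totalDegree = n ∧
      ∀ z : GaussianInt,
        zpoly n z
          = MvPolynomial.eval (fun j : Fin 2 => if j = 0 then ((z.re : ℤ) : ℂ) else ((z.im : ℤ) : ℂ)) P) ∧
    (∀ n : ℕ, DAnalytic (zpoly n)) ∧
    LinearIndependent ℂ (zpoly : ℕ → GaussianInt → ℂ) := by
  refine ⟨fun n => ?_, zpoly_analytic, zpoly_linearIndependent⟩
  obtain ⟨P, hPd, hP⟩ := zpoly_poly n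
  exact ⟨P, hPd, fun z => hP z.re z.im⟩

end
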